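/- There exist absolute constants c₁ > 0 and c₂ > 0 such that for every 0 < ε < 1/2 the following holds. Let H_ε = {(z, y) ∈ ℂ² : z·y = ε²} and G_ε = H_ε ∩ Q, where Q is the closed unit polydisk in ℂ². Then there exists a doubling covering 𝒰 of G_ε in H_ε, with charts given by analytic injective maps from disks in ℂ, such that κ(𝒰) ≤ c₁·log(c₂/ε), and such that any two points in the same connected component of G_ε can be joined by a chain of charts of 𝒰 in which every pair of consecutive charts has intersection radius at least 1/10. -/

import Mathlib

open Metric Set

noncomputable section

/-- A doubling covering of `G` in `Y ⊆ ℂ^N`, with charts given by analytic injective maps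
`ψ̃_j` defined on an open neighborhood of the closed ball `B̄₄ ⊆ ℂᵏ`, with images in `Y`,
such that the charts `U_j = ψ̃_j(B₁)` cover `G`. -/
structure DoublingCovering (k N : ℕ) (G Y : Set (EuclideanSpace ℂ (Fin N))) where
  /-- the number of charts `κ(𝒰)` -/
  kappa : ℕ
  /-- the chart maps -/
  psi : Fin kappa → EuclideanSpace ℂ (Fin k) → EuclideanSpace ℂ (Fin N)
  /-- the open neighborhoods of `B̄₄` on which the chart maps are analytic and injective -/
  dom : Fin kappa → Set (EuclideanSpace ℂ (Fin k))
  dom_open : ∀ j, IsOpen (dom j)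
  dom_superset : ∀ j, closedBall (0 : EuclideanSpace ℂ (Fin k)) 4 ⊆ dom j
  analytic : ∀ j, AnalyticOnNhd ℂ (psi j) (dom j)
  injOn : ∀ j, Set.InjOn (psi j) (dom j)
  mapsTo : ∀ j, Set.MapsTo (psi j) (dom j) Y
  covers : G ⊆ ⋃ j, psi j '' ball (0 : EuclideanSpace ℂ (Fin k)) 1

namespace DoublingCovering

variable {k N : ℕ} {G Y : Set (EuclideanSpace ℂ (Fin N))}

/-- The chart `U_j = ψ̃_j(B₁)`. -/
def chart (U : DoublingCovering k N G Y) (j : Fin U.kappa) :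
    Set (EuclideanSpace ℂ (Fin N)) :=
  U.psi j '' ball 0 1

/-- `ψ̃_j⁻¹(U_j ∩ S)` (the preimage taken inside `B₁`) contains a ball of radius `ρ`. -/
def RadGe (U : DoublingCovering k N G Y) (j : Fin U.kappa)
    (S : Set (EuclideanSpace ℂ (Fin N))) (ρ : ℝ) : Prop :=
  ∃ c : EuclideanSpace ℂ (Fin k),
    ball c ρ ⊆ {x ∈ ball (0 : EuclideanSpace ℂ (Fin k)) 1 | U.psi j x ∈ U.chart j ∩ S}

/-- The intersection radius `ρ(U_i, U_j)` of two charts is at least `ρ`. -/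
def InterGe (U : DoublingCovering k N G Y) (i j : Fin U.kappa) (ρ : ℝ) : Prop :=
  U.RadGe i (U.chart j) ρ ∧ U.RadGe j (U.chart i) ρ

/-- A chain of at most `L` pairwise distinct charts whose first chart satisfies
`ρ(U_{j₁}, Ω) ≥ ρ`, whose consecutive intersection radii are at least `ρ` (in particular
consecutive charts intersect), and whose last chart contains `z`. -/
def ChainFrom (U : DoublingCovering k N G Y) (Ω : Set (EuclideanSpace ℂ (Fin N)))
    (ρ : ℝ) (L : ℕ) (z : EuclideanSpace ℂ (Fin N)) : Prop :=
  ∃ (l : ℕ) (hl : 0 < l) (js : Fin l → Fin U.kappa), l ≤ L ∧ Function.Injective js ∧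
    U.RadGe (js ⟨0, hl⟩) Ω ρ ∧
    (∀ m : ℕ, (h : m + 1 < l) → U.InterGe (js ⟨m, by omega⟩) (js ⟨m + 1, h⟩) ρ) ∧
    z ∈ U.chart (js ⟨l - 1, by omega⟩)

end DoublingCovering

/-- `f` is sectionally `p`-valent in `W ⊆ ℂⁿ`: on every complex affine line
`L = {a + t·b : t ∈ ℂ}` (with `b ≠ 0`) and every `c ∈ ℂ`, the equation `f = c` has at most
`p` solutions on `L ∩ W`. -/
def SectionallyPValentOn {n : ℕ} (f : EuclideanSpace ℂ (Fin n) → ℂ)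
    (W : Set (EuclideanSpace ℂ (Fin n))) (p : ℕ) : Prop :=
  ∀ a b : EuclideanSpace ℂ (Fin n), b ≠ 0 → ∀ c : ℂ, ∀ s : Finset ℂ,
    (∀ t ∈ s, a + t • b ∈ W ∧ f (a + t • b) = c) → s.card ≤ p

namespace DoublingCovering

variable {k N : ℕ} {G Y : Set (EuclideanSpace ℂ (Fin N))}

/-- A chain of pairwise distinct charts joining `u` to `v`, with all consecutive intersection
radii at least `ρ` (consecutive charts in particular intersect). -/
def ChainJoin (U : DoublingCovering k N G Y) (ρ : ℝ)
    (u v : EuclideanSpace ℂ (Fin N)) : Prop :=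
  ∃ (l : ℕ) (hl : 0 < l) (js : Fin l → Fin U.kappa), Function.Injective js ∧
    u ∈ U.chart (js ⟨0, hl⟩) ∧ v ∈ U.chart (js ⟨l - 1, by omega⟩) ∧
    ∀ m : ℕ, (h : m + 1 < l) → U.InterGe (js ⟨m, by omega⟩) (js ⟨m + 1, h⟩) ρ

end DoublingCovering

namespace HypCover
open Metric Set Complex Real

abbrev E1 := EuclideanSpace ℂ (Fin 1)
abbrev E2 := EuclideanSpace ℂ (Fin 2)

def iota (z : ℂ) : E1 := EuclideanSpace.single 0 z

@[simp] lemma iota_apply (z : ℂ) : (iota z) 0 = z := by simp [iota]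

lemma E1_eq {x y : E1} (h : x 0 = y 0) : x = y := by
  refine PiLp.ext fun i => ?_
  have : i = 0 := Subsingleton.elim _ _
  rw [this]; exact h

lemma E1_norm (x : E1) : ‖x‖ = ‖x 0‖ := by
  rw [EuclideanSpace.norm_eq]
  simp [Fin.sum_univ_one, Real.sqrt_sq_eq_abs]

lemma E1_mem_ball {x c : E1} {r : ℝ} : x ∈ ball c r ↔ ‖x 0 - c 0‖ < r := by
  rw [mem_ball, dist_eq_norm]
  have : (x - c) 0 = x 0 - c 0 := rfl
  rw [← this, E1_norm]

def Phi (ε : ℝ) (ζ : ℂ) : E2 :=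
  Complex.exp ζ • EuclideanSpace.single 0 (1:ℂ)
    + ((ε:ℂ)^2 * Complex.exp (-ζ)) • EuclideanSpace.single 1 (1:ℂ)

@[simp] lemma Phi_apply0 (ε : ℝ) (ζ : ℂ) : Phi ε ζ 0 = Complex.exp ζ := by
  simp [Phi, EuclideanSpace.single_apply]

@[simp] lemma Phi_apply1 (ε : ℝ) (ζ : ℂ) : Phi ε ζ 1 = (ε:ℂ)^2 * Complex.exp (-ζ) := by
  simp [Phi, EuclideanSpace.single_apply]

def cen (m k : ℕ) : ℂ := ⟨-(m:ℝ) * (2/5), (k:ℝ) * (π/13) - π⟩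

def psiF (ε : ℝ) (m k : ℕ) (x : E1) : E2 := Phi ε (cen m k + x 0 / 2)

lemma psiF_analytic (ε : ℝ) (m k : ℕ) (s : Set E1) :
    AnalyticOnNhd ℂ (psiF ε m k) s := by
  intro x _
  have h0 : AnalyticAt ℂ (fun x : E1 => cen m k + x 0 / 2) x := by
    exact analyticAt_const.add (((EuclideanSpace.proj (0 : Fin 1)).analyticAt x).div
      (analyticAt_const : AnalyticAt ℂ (fun _ : E1 => (2:ℂ)) x) (by norm_num))
  have h1 : AnalyticAt ℂ (fun x : E1 => Complex.exp (cen m k + x 0 / 2)) x :=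
    analyticAt_cexp.comp h0
  have h2 : AnalyticAt ℂ (fun x : E1 => (ε:ℂ)^2 * Complex.exp (-(cen m k + x 0 / 2))) x :=
    analyticAt_const.mul (analyticAt_cexp.comp h0.neg)
  exact (h1.smul analyticAt_const).add (h2.smul analyticAt_const)

lemma psiF_memY (ε : ℝ) (m k : ℕ) (x : E1) :
    (psiF ε m k x) 0 * (psiF ε m k x) 1 = (ε:ℂ)^2 := by
  unfold psiF
  rw [Phi_apply0, Phi_apply1, Complex.exp_neg]
  field_simp [Complex.exp_ne_zero]

lemma cen_horiz (m k : ℕ) : ‖cen m k - cen (m+1) k‖ = 2/5 := by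
  have : cen m k - cen (m+1) k = Complex.ofReal (2/5) := by
    apply Complex.ext <;> simp [cen] <;> push_cast <;> ring
  rw [this, Complex.norm_real, Real.norm_eq_abs]; norm_num

lemma cen_vert (m k : ℕ) : ‖cen m k - cen m (k+1)‖ = π/13 := by
  have : cen m k - cen m (k+1) = Complex.I * Complex.ofReal (-(π/13)) := by
    apply Complex.ext <;> simp [cen] <;> push_cast <;> ring
  rw [this, norm_mul, Complex.norm_I, Complex.norm_real, Real.norm_eq_abs, one_mul, abs_neg,
    abs_of_pos (by positivity)]

lemma cen_adj {m k m' k' : ℕ}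
    (h : (k' = k ∧ (m' = m + 1 ∨ m = m' + 1)) ∨ (m' = m ∧ (k' = k + 1 ∨ k = k' + 1))) :
    ‖cen m k - cen m' k'‖ ≤ 4/5 := by
  have hπ4 : π < 3.15 := Real.pi_lt_d2
  have hπ13 : π/13 ≤ 4/5 := by linarith
  rcases h with ⟨hk, hm | hm⟩ | ⟨hm, hk | hk⟩
  · subst hk hm; rw [cen_horiz]; norm_num
  · subst hk hm
    rw [← neg_sub, norm_neg, cen_horiz]; norm_num
  · subst hm hk; rw [cen_vert]; exact hπ13
  · subst hm hk
    rw [← neg_sub, norm_neg, cen_vert]; exact hπ13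

lemma psiF_injOn (ε : ℝ) (m k : ℕ) : Set.InjOn (psiF ε m k) (ball 0 5) := by
  intro x hx y hy hxy
  have h0 : Complex.exp (cen m k + x 0 / 2) = Complex.exp (cen m k + y 0 / 2) := by
    have := congrArg (fun v : E2 => v 0) hxy
    simpa [psiF] using this
  obtain ⟨n, hn⟩ := Complex.exp_eq_exp_iff_exists_int.mp h0
  have hxn : ‖x 0‖ < 5 := by
    have := E1_mem_ball.mp hx; simpa using this
  have hyn : ‖y 0‖ < 5 := by
    have := E1_mem_ball.mp hy; simpa using this
  have heq : x 0 / 2 - y 0 / 2 = n * (2 * π * Complex.I) := by linear_combination hn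
  have habs : ‖x 0 - y 0‖ = |(n:ℝ)| * (4 * π) := by
    have : x 0 - y 0 = n * (2 * π * Complex.I) * 2 := by linear_combination 2 * heq
    rw [this]
    simp [abs_of_pos Real.pi_pos]
    ring
  have hlt : ‖x 0 - y 0‖ < 10 := by
    have h := norm_sub_le (x 0) (y 0)
    linarith
  have hn0 : n = 0 := by
    by_contra hne
    have h1 : (1:ℝ) ≤ |(n:ℝ)| := by
      rw [← Int.cast_abs]
      exact_mod_cast Int.one_le_abs (by exact_mod_cast hne)
    have h4 : (4:ℝ) * π ≤ |(n:ℝ)| * (4*π) := le_mul_of_one_le_left (by positivity) h1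
    have hπ : (3:ℝ) < π := Real.pi_gt_three
    rw [habs] at hlt
    linarith
  have : x 0 = y 0 := by
    rw [hn0] at heq
    push_cast at heq
    linear_combination 2 * heq
  exact E1_eq this

lemma psiF_radGe (ε : ℝ) (m k m' k' : ℕ)
    (hd : ‖cen m k - cen m' k'‖ ≤ 4/5) :
    ∃ c : E1, ball c (1/10) ⊆
      {x ∈ ball (0:E1) 1 |
        psiF ε m k x ∈ (psiF ε m k '' ball 0 1) ∩ (psiF ε m' k' '' ball 0 1)} := by
  set δ : ℂ := cen m' k' - cen m k with hδ
  have hδa : ‖δ‖ ≤ 4/5 := by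
    rw [hδ, ← norm_neg]; simpa using hd
  refine ⟨iota δ, fun x hx => ?_⟩
  have hx1 : ‖x 0 - δ‖ < 1/10 := by
    have := E1_mem_ball.mp hx; simpa using this
  have hx0 : ‖x 0‖ < 1 := by
    calc ‖x 0‖ ≤ ‖x 0 - δ‖ + ‖δ‖ := by
          simpa using norm_add_le (x 0 - δ) δ
      _ < 1 := by linarith
  have hxball : x ∈ ball (0:E1) 1 := by
    rw [E1_mem_ball]; simpa using hx0
  refine ⟨hxball, ⟨x, hxball, rfl⟩, ?_⟩
  refine ⟨iota (x 0 - 2*δ), ?_, ?_⟩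
  · rw [E1_mem_ball]
    simp only [iota_apply]
    have h00 : (0:E1) 0 = (0:ℂ) := rfl
    rw [h00, sub_zero]
    calc ‖x 0 - 2*δ‖ = ‖(x 0 - δ) + (-δ)‖ := by ring_nf
      _ ≤ ‖x 0 - δ‖ + ‖-δ‖ := norm_add_le _ _
      _ < 1 := by rw [norm_neg]; linarith
  · unfold psiF
    have harg : cen m' k' + (iota (x 0 - 2*δ)) 0 / 2 = cen m k + x 0 / 2 := by
      simp only [iota_apply, hδ]; ring
    rw [harg]

lemma cover_num (dx dy : ℝ) (h1 : 0 ≤ dx) (h2 : dx < 2/5) (h3 : 0 ≤ dy) (h4 : dy ≤ π/13) :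
    dx^2 + dy^2 < (1/2)^2 := by
  have hπ4 : π < 3.15 := Real.pi_lt_d2
  have h5 : dy ≤ 0.2424 := by linarith
  nlinarith

lemma abs_lt_of_sq (z : ℂ) (r : ℝ) (h0 : 0 < r) (h : z.re^2 + z.im^2 < r^2) :
    ‖z‖ < r := by
  have hsq : (‖z‖)^2 = z.re^2 + z.im^2 := by
    rw [Complex.sq_norm, Complex.normSq_apply]; ring
  nlinarith [norm_nonneg z]

/-- coverage -/
lemma coverage (ε : ℝ) (hε : 0 < ε) (hε1 : ε < 1) (u : E2)
    (hY : u 0 * u 1 = (ε:ℂ)^2) (h0 : ‖u 0‖ ≤ 1) (h1 : ‖u 1‖ ≤ 1) :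
    ∃ m k : ℕ, m ≤ ⌊(5:ℝ) * Real.log ε⁻¹⌋₊ ∧ k < 26 ∧
      u ∈ psiF ε m k '' ball 0 1 := by
  have hε2 : ((ε:ℂ))^2 ≠ 0 := by
    simp [pow_ne_zero, Complex.ofReal_ne_zero, hε.ne']
  have ht0 : u 0 ≠ 0 := fun h => hε2 (by rw [← hY, h, zero_mul])
  have habs_pos : 0 < ‖u 0‖ := norm_pos_iff.mpr ht0
  have hlow : ε^2 ≤ ‖u 0‖ := by
    have habsε : ‖(ε:ℂ)^2‖ = ε^2 := by
      rw [norm_pow, Complex.norm_real, Real.norm_eq_abs, abs_of_pos hε]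
    calc ε^2 = ‖u 0‖ * ‖u 1‖ := by rw [← norm_mul, hY, habsε]
      _ ≤ ‖u 0‖ * 1 := by
          exact mul_le_mul_of_nonneg_left h1 (norm_nonneg _)
      _ = ‖u 0‖ := mul_one _
  set w : ℂ := Complex.log (u 0) with hw
  have hwre : w.re = Real.log (‖u 0‖) := Complex.log_re _
  have hre_le : w.re ≤ 0 := by
    rw [hwre]; exact Real.log_nonpos (norm_nonneg _) h0
  have hre_ge : -(2 * Real.log ε⁻¹) ≤ w.re := by
    rw [hwre]
    have := Real.log_le_log (by positivity : (0:ℝ) < ε^2) hlow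
    rw [Real.log_pow] at this
    rw [Real.log_inv]
    push_cast at this ⊢
    linarith
  have hlogpos : 0 ≤ Real.log ε⁻¹ := by
    rw [Real.log_inv]
    have := Real.log_nonpos hε.le hε1.le
    linarith
  set a : ℝ := -w.re with ha
  have ha0 : 0 ≤ a := by simp [ha]; linarith
  set m : ℕ := ⌊(5/2 : ℝ) * a⌋₊ with hm
  have hmle : m ≤ ⌊(5:ℝ) * Real.log ε⁻¹⌋₊ := by
    apply Nat.floor_le_floor
    nlinarith
  have hmx : (m:ℝ) * (2/5) ≤ a ∧ a - (m:ℝ)*(2/5) < 2/5 := by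
    constructor
    · have := Nat.floor_le (by positivity : (0:ℝ) ≤ (5/2)*a)
      rw [← hm] at this; linarith
    · have := Nat.lt_floor_add_one ((5/2 : ℝ)*a)
      rw [← hm] at this; linarith
  have him1 : -π < w.im := by rw [hw]; exact Complex.neg_pi_lt_log_im _
  have him2 : w.im ≤ π := by rw [hw]; exact Complex.log_im_le_pi _
  set b : ℝ := w.im + π with hb
  have hb0 : 0 ≤ b := by simp [hb]; linarith
  have hb2 : b ≤ 2*π := by simp [hb]; linarith
  set k : ℕ := min ⌊(13/π) * b⌋₊ 25 with hk
  have hklt : k < 26 := by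
    have : k ≤ 25 := min_le_right _ _
    omega
  have hπ3 : (3:ℝ) < π := Real.pi_gt_three
  have hπ4 : π < 3.15 := Real.pi_lt_d2
  have hky : 0 ≤ b - (k:ℝ)*(π/13) ∧ b - (k:ℝ)*(π/13) ≤ π/13 := by
    rcases le_or_gt (⌊(13/π) * b⌋₊) 25 with hcase | hcase
    · have hkeq : k = ⌊(13/π) * b⌋₊ := by rw [hk, min_eq_left hcase]
      constructor
      · have := Nat.floor_le (by positivity : (0:ℝ) ≤ (13/π)*b)
        rw [← hkeq] at this
        have h2 : (k:ℝ) * (π/13) ≤ ((13/π)*b) * (π/13) := by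
          apply mul_le_mul_of_nonneg_right this (by positivity)
        have h3 : ((13/π)*b) * (π/13) = b := by field_simp
        linarith
      · have := Nat.lt_floor_add_one ((13/π)*b)
        rw [← hkeq] at this
        have h2 : ((13/π)*b) * (π/13) < ((k:ℝ)+1) * (π/13) := by
          apply mul_lt_mul_of_pos_right this (by positivity)
        have h3 : ((13/π)*b) * (π/13) = b := by field_simp
        nlinarith
    · have hkeq : k = 25 := by rw [hk, min_eq_right (by omega)]
      have h26 : (26:ℝ) ≤ (13/π) * b := by
        have h26' : (26:ℕ) ≤ ⌊(13/π) * b⌋₊ := by omega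
        calc (26:ℝ) = ((26:ℕ):ℝ) := by norm_num
          _ ≤ ⌊(13/π) * b⌋₊ := by exact_mod_cast h26'
          _ ≤ (13/π)*b := Nat.floor_le (by positivity)
      have hbeq : b = 2*π := by
        have h5 : (26:ℝ) * (π/13) ≤ ((13/π)*b) * (π/13) :=
          mul_le_mul_of_nonneg_right h26 (by positivity)
        have h3 : ((13/π)*b) * (π/13) = b := by field_simp
        have h6 : 2*π ≤ b := by nlinarith
        linarith
      rw [hkeq, hbeq]
      push_cast
      constructor <;> linarith
  have hre : (w - cen m k).re = -(a - (m:ℝ)*(2/5)) := by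
    simp [cen, Complex.sub_re, ha]
    ring
  have him : (w - cen m k).im = b - (k:ℝ)*(π/13) := by
    simp [cen, Complex.sub_im, hb]
    ring
  have habs2 : ‖w - cen m k‖ < 1/2 := by
    apply abs_lt_of_sq _ _ (by norm_num)
    rw [hre, him, neg_sq]
    exact cover_num _ _ (by linarith [hmx.1]) hmx.2 hky.1 hky.2
  have hxball : iota (2 * (w - cen m k)) ∈ ball (0:E1) 1 := by
    rw [E1_mem_ball]
    have h00 : (0:E1) 0 = (0:ℂ) := rfl
    simp only [iota_apply, h00]
    have h2 : ‖2 * (w - cen m k) - 0‖ = 2 * ‖w - cen m k‖ := by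
      rw [sub_zero, norm_mul]; simp
    rw [h2]; linarith
  refine ⟨m, k, hmle, hklt, iota (2 * (w - cen m k)), hxball, ?_⟩
  have harg : cen m k + (iota (2 * (w - cen m k))) 0 / 2 = w := by
    simp only [iota_apply]; ring
  unfold psiF
  rw [harg]
  have hu0 : Complex.exp w = u 0 := Complex.exp_log ht0
  have hu1 : (ε:ℂ)^2 * Complex.exp (-w) = u 1 := by
    rw [Complex.exp_neg, hu0, ← hY]
    field_simp
  refine PiLp.ext fun i => ?_
  fin_cases i
  · show Phi ε w 0 = u 0
    rw [Phi_apply0]; exact hu0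
  · show Phi ε w 1 = u 1
    rw [Phi_apply1]; exact hu1

/-! ### chain combinatorics -/

def mst (a b i : ℕ) : ℕ := if a ≤ b then a + i else a - i
def dN (a b : ℕ) : ℕ := (a - b) + (b - a)

lemma mst_zero (a b : ℕ) : mst a b 0 = a := by unfold mst; split <;> omega
lemma mst_last (a b : ℕ) : mst a b (dN a b) = b := by unfold mst dN; split <;> omega
lemma mst_le (a b i : ℕ) (h : i ≤ dN a b) : mst a b i ≤ max a b := by
  unfold mst dN at *; split <;> omega
lemma mst_inj (a b i j : ℕ) (hi : i ≤ dN a b) (hj : j ≤ dN a b) (h : mst a b i = mst a b j) :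
    i = j := by unfold mst dN at *; split at h <;> omega
lemma mst_succ (a b i : ℕ) (h : i + 1 ≤ dN a b) :
    mst a b (i+1) = mst a b i + 1 ∨ mst a b i = mst a b (i+1) + 1 := by
  unfold mst dN at *; split <;> omega

def stp (m₁ k₁ m₂ k₂ i : ℕ) : ℕ × ℕ :=
  if i ≤ dN m₁ m₂ then (mst m₁ m₂ i, k₁) else (m₂, mst k₁ k₂ (i - dN m₁ m₂))

lemma stp_zero (m₁ k₁ m₂ k₂ : ℕ) : stp m₁ k₁ m₂ k₂ 0 = (m₁, k₁) := by
  unfold stp; rw [if_pos (Nat.zero_le _), mst_zero]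
lemma stp_last (m₁ k₁ m₂ k₂ : ℕ) :
    stp m₁ k₁ m₂ k₂ (dN m₁ m₂ + dN k₁ k₂) = (m₂, k₂) := by
  unfold stp
  rcases Nat.eq_zero_or_pos (dN k₁ k₂) with h | h
  · have hk : k₁ = k₂ := by unfold dN at h; omega
    rw [if_pos (by omega), h, Nat.add_zero, mst_last, hk]
  · rw [if_neg (by omega)]
    have : dN m₁ m₂ + dN k₁ k₂ - dN m₁ m₂ = dN k₁ k₂ := by omega
    rw [this, mst_last]
lemma stp_mem {M K : ℕ} (m₁ k₁ m₂ k₂ i : ℕ) (hi : i ≤ dN m₁ m₂ + dN k₁ k₂)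
    (hm₁ : m₁ < M) (hm₂ : m₂ < M) (hk₁ : k₁ < K) (hk₂ : k₂ < K) :
    (stp m₁ k₁ m₂ k₂ i).1 < M ∧ (stp m₁ k₁ m₂ k₂ i).2 < K := by
  unfold stp
  split
  · have := mst_le m₁ m₂ i (by assumption)
    exact ⟨by simp only; omega, by simpa⟩
  · have := mst_le k₁ k₂ (i - dN m₁ m₂) (by omega)
    exact ⟨by simpa, by simp only; omega⟩

lemma stp_inj (m₁ k₁ m₂ k₂ i j : ℕ) (hij : i < j) (hj : j ≤ dN m₁ m₂ + dN k₁ k₂) :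
    stp m₁ k₁ m₂ k₂ i ≠ stp m₁ k₁ m₂ k₂ j := by
  unfold stp
  intro h
  split_ifs at h with h1 h2 h2
  · rw [Prod.mk.injEq] at h
    exact absurd (mst_inj m₁ m₂ i j h1 h2 h.1) (by omega)
  · rw [Prod.mk.injEq] at h
    have h3 := h.2
    have hj2 : j - dN m₁ m₂ ≤ dN k₁ k₂ := by omega
    unfold mst dN at h3 hj2 h1 h2
    split at h3 <;> omega
  · omega
  · rw [Prod.mk.injEq] at h
    have h3 := h.2
    have := mst_inj k₁ k₂ (i - dN m₁ m₂) (j - dN m₁ m₂) (by omega) (by omega) h3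
    omega

lemma stp_adj (m₁ k₁ m₂ k₂ i : ℕ) (h : i + 1 ≤ dN m₁ m₂ + dN k₁ k₂) :
    ((stp m₁ k₁ m₂ k₂ (i+1)).2 = (stp m₁ k₁ m₂ k₂ i).2 ∧
      ((stp m₁ k₁ m₂ k₂ (i+1)).1 = (stp m₁ k₁ m₂ k₂ i).1 + 1 ∨
       (stp m₁ k₁ m₂ k₂ i).1 = (stp m₁ k₁ m₂ k₂ (i+1)).1 + 1)) ∨
    ((stp m₁ k₁ m₂ k₂ (i+1)).1 = (stp m₁ k₁ m₂ k₂ i).1 ∧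
      ((stp m₁ k₁ m₂ k₂ (i+1)).2 = (stp m₁ k₁ m₂ k₂ i).2 + 1 ∨
       (stp m₁ k₁ m₂ k₂ i).2 = (stp m₁ k₁ m₂ k₂ (i+1)).2 + 1)) := by
  unfold stp
  split_ifs with h1 h2 h2
  · left
    exact ⟨rfl, mst_succ m₁ m₂ i h1⟩
  · omega
  · have hieq : i = dN m₁ m₂ := by omega
    right
    constructor
    · simp only
      rw [hieq, mst_last]
    · simp only
      have h5 : i + 1 - dN m₁ m₂ = 1 := by omega
      rw [h5]
      have := mst_succ k₁ k₂ 0 (by omega)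
      rw [mst_zero] at this
      simpa using this
  · right
    refine ⟨rfl, ?_⟩
    have h5 : i + 1 - dN m₁ m₂ = (i - dN m₁ m₂) + 1 := by omega
    simp only
    rw [h5]
    exact mst_succ k₁ k₂ (i - dN m₁ m₂) (by omega)

end HypCover
namespace HypCover
open Metric Set Complex Real

def Yset (ε : ℝ) : Set E2 := {v | v 0 * v 1 = (ε:ℂ)^2}
def Gset (ε : ℝ) : Set E2 :=
  Yset ε ∩ {v | ‖v 0‖ ≤ 1 ∧ ‖v 1‖ ≤ 1}

def Mn (ε : ℝ) : ℕ := ⌊(5:ℝ) * Real.log ε⁻¹⌋₊ + 1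

def theCover (ε : ℝ) (hε : 0 < ε) (hε1 : ε < 1) :
    DoublingCovering 1 2 (Gset ε) (Yset ε) where
  kappa := Mn ε * 26
  psi := fun j => psiF ε (j.1 / 26) (j.1 % 26)
  dom := fun _ => ball 0 5
  dom_open := fun _ => isOpen_ball
  dom_superset := fun _ => closedBall_subset_ball (by norm_num)
  analytic := fun _ => psiF_analytic ε _ _ _
  injOn := fun _ => psiF_injOn ε _ _
  mapsTo := fun j x _ => psiF_memY ε _ _ x
  covers := by
    intro u hu
    obtain ⟨hu1, hu2, hu3⟩ := hu
    obtain ⟨m, k, hm, hk, hmem⟩ := coverage ε hε hε1 u hu1 hu2 hu3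
    have hb : 26 * m + k < Mn ε * 26 := by unfold Mn at *; omega
    refine mem_iUnion.mpr ⟨⟨26 * m + k, hb⟩, ?_⟩
    have hdiv : (26 * m + k) / 26 = m := by omega
    have hmod : (26 * m + k) % 26 = k := by omega
    show u ∈ psiF ε ((26 * m + k) / 26) ((26 * m + k) % 26) '' ball 0 1
    rw [hdiv, hmod]
    exact hmem

lemma theCover_chart (ε : ℝ) (hε : 0 < ε) (hε1 : ε < 1) (j : Fin (Mn ε * 26)) :
    (theCover ε hε hε1).chart j = psiF ε (j.1 / 26) (j.1 % 26) '' ball 0 1 := rfl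

lemma theCover_interGe (ε : ℝ) (hε : 0 < ε) (hε1 : ε < 1) (j j' : Fin (Mn ε * 26))
    (hd : ‖cen (j.1/26) (j.1%26) - cen (j'.1/26) (j'.1%26)‖ ≤ 4/5) :
    (theCover ε hε hε1).InterGe j j' (1/10) := by
  constructor
  · obtain ⟨c, hc⟩ := psiF_radGe ε (j.1/26) (j.1%26) (j'.1/26) (j'.1%26) hd
    exact ⟨c, hc⟩
  · obtain ⟨c, hc⟩ := psiF_radGe ε (j'.1/26) (j'.1%26) (j.1/26) (j.1%26)
      (by rw [← neg_sub, norm_neg]; exact hd)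
    exact ⟨c, hc⟩

lemma theCover_chain (ε : ℝ) (hε : 0 < ε) (hε1 : ε < 1) {u₁ u₂ : E2}
    (hu₁ : u₁ ∈ Gset ε) (hu₂ : u₂ ∈ Gset ε) :
    (theCover ε hε hε1).ChainJoin (1/10) u₁ u₂ := by
  obtain ⟨m₁, k₁, hm₁, hk₁, hmem₁⟩ := coverage ε hε hε1 u₁ hu₁.1 hu₁.2.1 hu₁.2.2
  obtain ⟨m₂, k₂, hm₂, hk₂, hmem₂⟩ := coverage ε hε hε1 u₂ hu₂.1 hu₂.2.1 hu₂.2.2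
  have hm₁' : m₁ < Mn ε := by unfold Mn; omega
  have hm₂' : m₂ < Mn ε := by unfold Mn; omega
  set D : ℕ := dN m₁ m₂ + dN k₁ k₂ with hD
  have hb : ∀ i : ℕ, i ≤ D →
      26 * (stp m₁ k₁ m₂ k₂ i).1 + (stp m₁ k₁ m₂ k₂ i).2 < Mn ε * 26 := by
    intro i hi
    obtain ⟨h1, h2⟩ := stp_mem m₁ k₁ m₂ k₂ i hi hm₁' hm₂' hk₁ hk₂
    omega
  refine ⟨D + 1, by omega, fun i => ⟨26 * (stp m₁ k₁ m₂ k₂ i.1).1 + (stp m₁ k₁ m₂ k₂ i.1).2,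
    hb i.1 (by have := i.isLt; omega)⟩, ?_, ?_, ?_, ?_⟩
  · -- injectivity
    intro i j hij
    have hv := congrArg Fin.val hij
    simp only at hv
    have h2i := (stp_mem m₁ k₁ m₂ k₂ i.1 (by have := i.isLt; omega) hm₁' hm₂' hk₁ hk₂).2
    have h2j := (stp_mem m₁ k₁ m₂ k₂ j.1 (by have := j.isLt; omega) hm₁' hm₂' hk₁ hk₂).2
    have hpair : stp m₁ k₁ m₂ k₂ i.1 = stp m₁ k₁ m₂ k₂ j.1 := by
      have e1 : (stp m₁ k₁ m₂ k₂ i.1).1 = (stp m₁ k₁ m₂ k₂ j.1).1 := by omega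
      have e2 : (stp m₁ k₁ m₂ k₂ i.1).2 = (stp m₁ k₁ m₂ k₂ j.1).2 := by omega
      exact Prod.ext e1 e2
    rcases Nat.lt_trichotomy i.1 j.1 with h | h | h
    · exact absurd hpair (stp_inj m₁ k₁ m₂ k₂ i.1 j.1 h (by have := j.isLt; omega))
    · exact Fin.ext h
    · exact absurd hpair.symm (stp_inj m₁ k₁ m₂ k₂ j.1 i.1 h (by have := i.isLt; omega))
  · -- u₁ in first chart
    have hv : (26 * (stp m₁ k₁ m₂ k₂ (0:ℕ)).1 + (stp m₁ k₁ m₂ k₂ (0:ℕ)).2) = 26 * m₁ + k₁ := by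
      rw [stp_zero]
    show u₁ ∈ psiF ε ((26 * (stp m₁ k₁ m₂ k₂ (0:ℕ)).1 + (stp m₁ k₁ m₂ k₂ (0:ℕ)).2) / 26)
      ((26 * (stp m₁ k₁ m₂ k₂ (0:ℕ)).1 + (stp m₁ k₁ m₂ k₂ (0:ℕ)).2) % 26) '' ball 0 1
    rw [hv]
    have hdiv : (26 * m₁ + k₁) / 26 = m₁ := by omega
    have hmod : (26 * m₁ + k₁) % 26 = k₁ := by omega
    rw [hdiv, hmod]
    exact hmem₁
  · -- u₂ in last chart
    have hl1 : (D + 1 - 1 : ℕ) = D := by omega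
    have hv : (26 * (stp m₁ k₁ m₂ k₂ (D+1-1:ℕ)).1 + (stp m₁ k₁ m₂ k₂ (D+1-1:ℕ)).2)
        = 26 * m₂ + k₂ := by
      rw [hl1, hD, stp_last]
    show u₂ ∈ psiF ε ((26 * (stp m₁ k₁ m₂ k₂ (D+1-1:ℕ)).1 + (stp m₁ k₁ m₂ k₂ (D+1-1:ℕ)).2) / 26)
      ((26 * (stp m₁ k₁ m₂ k₂ (D+1-1:ℕ)).1 + (stp m₁ k₁ m₂ k₂ (D+1-1:ℕ)).2) % 26) '' ball 0 1
    rw [hv]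
    have hdiv : (26 * m₂ + k₂) / 26 = m₂ := by omega
    have hmod : (26 * m₂ + k₂) % 26 = k₂ := by omega
    rw [hdiv, hmod]
    exact hmem₂
  · -- consecutive intersections
    intro n hn
    apply theCover_interGe
    have h2n := (stp_mem m₁ k₁ m₂ k₂ n (by omega) hm₁' hm₂' hk₁ hk₂).2
    have h2n' := (stp_mem m₁ k₁ m₂ k₂ (n+1) (by omega) hm₁' hm₂' hk₁ hk₂).2
    have e1 : (26 * (stp m₁ k₁ m₂ k₂ n).1 + (stp m₁ k₁ m₂ k₂ n).2) / 26
        = (stp m₁ k₁ m₂ k₂ n).1 := by omega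
    have e2 : (26 * (stp m₁ k₁ m₂ k₂ n).1 + (stp m₁ k₁ m₂ k₂ n).2) % 26
        = (stp m₁ k₁ m₂ k₂ n).2 := by omega
    have e3 : (26 * (stp m₁ k₁ m₂ k₂ (n+1)).1 + (stp m₁ k₁ m₂ k₂ (n+1)).2) / 26
        = (stp m₁ k₁ m₂ k₂ (n+1)).1 := by omega
    have e4 : (26 * (stp m₁ k₁ m₂ k₂ (n+1)).1 + (stp m₁ k₁ m₂ k₂ (n+1)).2) % 26
        = (stp m₁ k₁ m₂ k₂ (n+1)).2 := by omega
    show ‖cen _ _ - cen _ _‖ ≤ 4/5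
    rw [e1, e2, e3, e4]
    have hadj := stp_adj m₁ k₁ m₂ k₂ n (by omega)
    apply cen_adj
    tauto

lemma theCover_kappa_le (ε : ℝ) (hε : 0 < ε) (hε1 : ε < 1) :
    ((theCover ε hε hε1).kappa : ℝ) ≤ 130 * Real.log (Real.exp 1 / ε) := by
  have h1 : Real.log (Real.exp 1 / ε) = 1 + Real.log ε⁻¹ := by
    rw [Real.log_div (Real.exp_ne_zero 1) hε.ne', Real.log_exp, Real.log_inv]
    ring
  have h2 : 0 ≤ Real.log ε⁻¹ := by
    rw [Real.log_inv]
    have := Real.log_nonpos hε.le hε1.le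
    linarith
  have h3 : (⌊(5:ℝ) * Real.log ε⁻¹⌋₊ : ℝ) ≤ 5 * Real.log ε⁻¹ :=
    Nat.floor_le (by positivity)
  show ((Mn ε * 26 : ℕ) : ℝ) ≤ _
  unfold Mn
  push_cast
  rw [h1]
  nlinarith

end HypCover
/-- Doubling coverings of the hyperbola `H_ε = {z·y = ε²}`: there are absolute constants
`c₁, c₂ > 0` such that for every `0 < ε < 1/2`, `G_ε = H_ε ∩ Q` admits a doubling covering
`𝒰` in `H_ε` (with one-dimensional charts) with `κ(𝒰) ≤ c₁ log(c₂/ε)`, in which any two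
points of the same connected component of `G_ε` are joined by a chain of charts with all
consecutive intersection radii at least `1/10`. -/
theorem doubling_covering_of_hyperbola :
    ∃ c₁ c₂ : ℝ, 0 < c₁ ∧ 0 < c₂ ∧
      ∀ ε : ℝ, 0 < ε → ε < 1 / 2 →
      ∀ Y G : Set (EuclideanSpace ℂ (Fin 2)),
        Y = {v | v 0 * v 1 = (ε : ℂ) ^ 2} →
        G = Y ∩ {v | ‖v 0‖ ≤ 1 ∧ ‖v 1‖ ≤ 1} →
      ∃ U : DoublingCovering 1 2 G Y,
        (U.kappa : ℝ) ≤ c₁ * Real.log (c₂ / ε) ∧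
        ∀ u₁ ∈ G, ∀ u₂ ∈ connectedComponentIn G u₁, U.ChainJoin (1 / 10) u₁ u₂ := by
  refine ⟨130, Real.exp 1, by norm_num, Real.exp_pos 1, ?_⟩
  intro ε hε hε2 Y G hY hG
  have hε1 : ε < 1 := by linarith
  subst hY; subst hG
  refine ⟨HypCover.theCover ε hε hε1, HypCover.theCover_kappa_le ε hε hε1, ?_⟩
  intro u₁ hu₁ u₂ hu₂
  exact HypCover.theCover_chain ε hε hε1 hu₁ (connectedComponentIn_subset _ _ hu₂)
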